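/- The periodic autocorrelation of a Zadoff–Chu sequence satisfies R_{u,u}[τ] = Σ_{n=0}^{N-1} x_u[n]·conj(x_u[n+τ]) = N if N divides τ, and 0 otherwise. -/

import Mathlib

open Complex

/-- Perfect periodic autocorrelation of the Zadoff–Chu sequence. -/
theorem zc_autocorr (N : ℕ) (hN : 1 ≤ N) (u q c : ℤ) (hu : Int.gcd u (N : ℤ) = 1)
    (hc : c % 2 = (N : ℤ) % 2) (τ : ℤ)
    (x : ℤ → ℂ)
    (hx : ∀ n : ℤ, x n =
      Complex.exp (-((Real.pi : ℂ) * u * (n : ℂ) * ((n : ℂ) + c + 2 * q) / N) * Complex.I)) :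
    (∑ n ∈ Finset.range N, x n * (starRingEnd ℂ) (x (n + τ)))
      = if (N : ℤ) ∣ τ then (N : ℂ) else 0 := by
  have hNC : (N : ℂ) ≠ 0 := Nat.cast_ne_zero.mpr (by omega)
  set C : ℂ := Complex.exp (Real.pi * Complex.I * ((u * (τ * (τ + c + 2 * q)) : ℤ) : ℂ) / N)
    with hC
  set ζ : ℂ := Complex.exp (Real.pi * Complex.I * ((2 * u * τ : ℤ) : ℂ) / N) with hζ
  have key : ∀ n : ℕ, x n * (starRingEnd ℂ) (x ((n : ℤ) + τ)) = C * ζ ^ n := by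
    intro n
    rw [hx, hx, hC, hζ, ← Complex.exp_nat_mul, ← Complex.exp_add, ← Complex.exp_conj,
      ← Complex.exp_add]
    congr 1
    simp only [map_mul, map_div₀, map_add, map_neg, Complex.conj_I, Complex.conj_ofReal,
      map_intCast, map_natCast, map_ofNat]
    push_cast
    field_simp
    ring
  rw [Finset.sum_congr rfl (fun n _ => key n), ← Finset.mul_sum]
  by_cases h : (N : ℤ) ∣ τ
  · rw [if_pos h]
    obtain ⟨m, hm⟩ := h
    have heven : ∃ e : ℤ, m * ((N : ℤ) * m + c + 2 * q) = 2 * e := by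
      rcases Int.even_or_odd m with hme | hmo
      · obtain ⟨a, ha⟩ := hme
        exact ⟨a * ((N : ℤ) * m + c + 2 * q), by rw [ha]; ring⟩
      · have hm2 : m % 2 = 1 := Int.odd_iff.mp hmo
        have hmul := Int.mul_emod (N : ℤ) m 2
        rw [hm2] at hmul
        have hNm : ((N : ℤ) * m) % 2 = (N : ℤ) % 2 := by omega
        have : ((N : ℤ) * m + c + 2 * q) % 2 = 0 := by omega
        obtain ⟨b, hb⟩ := Int.dvd_of_emod_eq_zero this
        exact ⟨m * b, by rw [hb]; ring⟩
    obtain ⟨e, he⟩ := heven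
    have heC : (m : ℂ) * ((N : ℂ) * m + c + 2 * q) = 2 * e := by exact_mod_cast he
    have hC1 : C = 1 := by
      rw [hC]
      have : Real.pi * Complex.I * ((u * (τ * (τ + c + 2 * q)) : ℤ) : ℂ) / N
          = ((u * e : ℤ) : ℂ) * (2 * Real.pi * Complex.I) := by
        push_cast [hm]
        field_simp
        linear_combination (u : ℂ) * heC
      rw [this]
      exact Complex.exp_int_mul_two_pi_mul_I _
    have hζ1 : ζ = 1 := by
      rw [hζ]
      have : Real.pi * Complex.I * ((2 * u * τ : ℤ) : ℂ) / N
          = ((u * m : ℤ) : ℂ) * (2 * Real.pi * Complex.I) := by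
        push_cast [hm]
        field_simp
      rw [this]
      exact Complex.exp_int_mul_two_pi_mul_I _
    simp [hC1, hζ1]
  · rw [if_neg h]
    have hζN : ζ ^ N = 1 := by
      rw [hζ, ← Complex.exp_nat_mul]
      have : (N : ℂ) * (Real.pi * Complex.I * ((2 * u * τ : ℤ) : ℂ) / N)
          = ((u * τ : ℤ) : ℂ) * (2 * Real.pi * Complex.I) := by
        push_cast
        field_simp
      rw [this]
      exact Complex.exp_int_mul_two_pi_mul_I _
    have hζne : ζ ≠ 1 := by
      intro h1
      rw [hζ, Complex.exp_eq_one_iff] at h1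
      obtain ⟨k, hk⟩ := h1
      have hπ : (Real.pi : ℂ) ≠ 0 := Complex.ofReal_ne_zero.mpr Real.pi_ne_zero
      have hI : Complex.I ≠ 0 := Complex.I_ne_zero
      have : ((u * τ : ℤ) : ℂ) = ((k * N : ℤ) : ℂ) := by
        push_cast
        field_simp at hk
        have h2 : (2 * (Real.pi : ℂ) * Complex.I) * ((u : ℂ) * τ)
            = (2 * (Real.pi : ℂ) * Complex.I) * ((k : ℂ) * N) := by push_cast at hk; linear_combination (Real.pi * Complex.I : ℂ) * hk
        have h3 : (2 * (Real.pi : ℂ) * Complex.I) ≠ 0 := by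
          simp [hπ, hI]
        exact mul_left_cancel₀ h3 h2
      have huτ : u * τ = k * N := by exact_mod_cast this
      have hdvd : (N : ℤ) ∣ u * τ := ⟨k, by linarith⟩
      have hcop : IsCoprime (N : ℤ) u :=
        (Int.isCoprime_iff_gcd_eq_one.mpr hu).symm
      exact h (hcop.dvd_of_dvd_mul_left hdvd)
    rw [geom_sum_eq hζne, hζN]
    simp
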